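/- With the setup as above, U⁺ = ⋃_{ε > 0} ⋂_{0 < ε' < ε} α^{ε'}(F_{≥0}ⁿ): every element of U⁺ lies in α^{ε'}(F_{≥0}ⁿ) for all sufficiently small ε' > 0, and conversely. -/

import Mathlib

open Classical

/-- `Z_i = ⋃ {S ∈ 𝒮 : i ∉ S}`. -/
def Zset (n : ℕ) (𝒮 : Set (Set (Fin n))) (i : Fin n) : Set (Fin n) :=
  ⋃₀ {S ∈ 𝒮 | i ∉ S}

/-- `α^ε_i(z) = z_i + ε ∑_{j ∉ Z_i} z_j`. -/
noncomputable def alphaMap (F : Subfield ℝ) (n : ℕ) (𝒮 : Set (Set (Fin n))) (ε : F)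
    (z : Fin n → F) : Fin n → F :=
  fun i => z i + ε * ∑ j ∈ Finset.univ.filter (fun j => j ∉ Zset n 𝒮 i), z j

/-- `P_i = ⋃ {S ∈ 𝒮 : i ∈ E^≥_S}` where `E^≥_S = Sᶜ ∪ E^>_S`. -/
def Pset (n : ℕ) (𝒮 : Set (Set (Fin n))) (Egt : Set (Fin n) → Set (Fin n)) (i : Fin n) :
    Set (Fin n) :=
  ⋃₀ {S ∈ 𝒮 | i ∈ Sᶜ ∪ Egt S}

/-- `β^R_i(y) = y_i - R ∑_{j ∉ P_i, P_j ≠ P_i} y_j`. -/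
noncomputable def betaMap (F : Subfield ℝ) (n : ℕ) (𝒮 : Set (Set (Fin n)))
    (Egt : Set (Fin n) → Set (Fin n)) (R : F) (y : Fin n → F) : Fin n → F :=
  fun i => y i - R * ∑ j ∈ Finset.univ.filter
    (fun j => j ∉ Pset n 𝒮 Egt i ∧ Pset n 𝒮 Egt j ≠ Pset n 𝒮 Egt i), y j

/-- `U⁺ = ⋃_{S ∈ 𝒮} F_{>0}^S · 0^{Sᶜ}`. -/
def Uset (F : Subfield ℝ) (n : ℕ) (𝒮 : Set (Set (Fin n))) : Set (Fin n → F) :=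
  {x | ∃ S ∈ 𝒮, (∀ i ∈ S, 0 < x i) ∧ ∀ i ∉ S, x i = 0}

/-- `V⁺ = ⋃_{S ∈ 𝒮} 0^{E⁰_S} · F_{>0}^{E^>_S} · F^{E^*_S}` (zero off `S`, strictly
positive on `E^>_S`, arbitrary on `E^*_S`). -/
def Vset (F : Subfield ℝ) (n : ℕ) (𝒮 : Set (Set (Fin n)))
    (Egt : Set (Fin n) → Set (Fin n)) : Set (Fin n → F) :=
  {x | ∃ S ∈ 𝒮, (∀ i ∉ S, x i = 0) ∧ ∀ i ∈ Egt S, 0 < x i}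

section aux

set_option maxHeartbeats 1000000
set_option synthInstance.maxHeartbeats 200000

open Matrix

variable {n : ℕ} {𝒮 : Set (Set (Fin n))}

lemma not_mem_Zset_self (i : Fin n) : i ∉ Zset n 𝒮 i := by
  rintro ⟨S, ⟨hS, hiS⟩, hiS'⟩; exact hiS hiS'

lemma sUnion_mem_lattice (hempty : ∅ ∈ 𝒮) (hcup : ∀ S₁ ∈ 𝒮, ∀ S₂ ∈ 𝒮, S₁ ∪ S₂ ∈ 𝒮)
    {𝒯 : Set (Set (Fin n))} (h𝒯 : 𝒯 ⊆ 𝒮) : ⋃₀ 𝒯 ∈ 𝒮 := by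
  have hfin : 𝒯.Finite := Set.toFinite _
  refine Set.Finite.induction_on (motive := fun T _ => T ⊆ 𝒮 → ⋃₀ T ∈ 𝒮) 𝒯 hfin
    (fun _ => by simpa using hempty) ?_ h𝒯
  intro a s ha hs ih hsub
  rw [Set.sUnion_insert]
  exact hcup _ (hsub (Set.mem_insert _ _)) _ (ih (fun T hT => hsub (Set.mem_insert_of_mem _ hT)))

lemma Zset_mem_lattice (hempty : ∅ ∈ 𝒮) (hcup : ∀ S₁ ∈ 𝒮, ∀ S₂ ∈ 𝒮, S₁ ∪ S₂ ∈ 𝒮) (i : Fin n) :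
    Zset n 𝒮 i ∈ 𝒮 :=
  sUnion_mem_lattice hempty hcup (Set.sep_subset _ _)

lemma biInter_mem_lattice (huniv : Set.univ ∈ 𝒮) (hcap : ∀ S₁ ∈ 𝒮, ∀ S₂ ∈ 𝒮, S₁ ∩ S₂ ∈ 𝒮)
    (s : Finset (Fin n)) (g : Fin n → Set (Fin n)) (hg : ∀ k ∈ s, g k ∈ 𝒮) :
    (⋂ k ∈ s, g k) ∈ 𝒮 := by
  induction s using Finset.induction_on with
  | empty => simpa using huniv
  | @insert a s ha ih =>
      rw [Finset.set_biInter_insert]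
      exact hcap _ (hg _ (Finset.mem_insert_self _ _)) _
        (ih (fun k hk => hg _ (Finset.mem_insert_of_mem hk)))

/-- The reverse inclusion: if `x` is the image under `α^{ε'}` of a nonnegative vector for a
single `ε' > 0`, then `x ∈ U⁺`. -/
lemma mem_Uset_of_alpha {F : Subfield ℝ} (hempty : ∅ ∈ 𝒮) (huniv : Set.univ ∈ 𝒮)
    (hcup : ∀ S₁ ∈ 𝒮, ∀ S₂ ∈ 𝒮, S₁ ∪ S₂ ∈ 𝒮)
    (hcap : ∀ S₁ ∈ 𝒮, ∀ S₂ ∈ 𝒮, S₁ ∩ S₂ ∈ 𝒮)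
    {ε' : F} (hε' : 0 < ε') {z x : Fin n → F} (hz : ∀ i, 0 ≤ z i)
    (hx : alphaMap F n 𝒮 ε' z = x) : x ∈ Uset F n 𝒮 := by
  have hsum : ∀ i, 0 ≤ ∑ j ∈ Finset.univ.filter (fun j => j ∉ Zset n 𝒮 i), z j :=
    fun i => Finset.sum_nonneg fun j _ => hz j
  have hxi : ∀ i, x i = z i + ε' * ∑ j ∈ Finset.univ.filter (fun j => j ∉ Zset n 𝒮 i), z j := by
    intro i; rw [← hx]; rfl
  have hxnn : ∀ i, 0 ≤ x i := by
    intro i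
    rw [hxi i]
    have := hz i; have := hsum i
    nlinarith
  have hzero : ∀ k, x k = 0 → ∀ j, j ∉ Zset n 𝒮 k → z j = 0 := by
    intro k hk j hj
    have h := hxi k
    rw [hk] at h
    have hs0 : ∑ j ∈ Finset.univ.filter (fun j => j ∉ Zset n 𝒮 k), z j = 0 := by
      have h1 : ε' * ∑ j ∈ Finset.univ.filter (fun j => j ∉ Zset n 𝒮 k), z j ≤ 0 := by
        have := hz k; linarith
      have h2 := hsum k
      nlinarith
    exact (Finset.sum_eq_zero_iff_of_nonneg (fun j _ => hz j)).mp hs0 j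
      (Finset.mem_filter.mpr ⟨Finset.mem_univ _, hj⟩)
  classical
  refine ⟨⋂ k ∈ Finset.univ.filter (fun k : Fin n => x k = 0), Zset n 𝒮 k,
    biInter_mem_lattice huniv hcap _ _ (fun k _ => Zset_mem_lattice hempty hcup k), ?_, ?_⟩
  · intro i hiS
    rcases (hxnn i).lt_or_eq with h | h
    · exact h
    · exfalso
      have hiZ : i ∈ Zset n 𝒮 i := by
        have := Set.mem_iInter₂.mp hiS i
        exact this (Finset.mem_filter.mpr ⟨Finset.mem_univ _, h.symm⟩)
      exact not_mem_Zset_self i hiZ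
  · intro i hiS
    by_contra hxi0
    apply hiS
    refine Set.mem_iInter₂.mpr ?_
    intro k hk
    have hk0 : x k = 0 := (Finset.mem_filter.mp hk).2
    -- there is j ∉ Z_i with z j ≠ 0
    have hexj : ∃ j, j ∉ Zset n 𝒮 i ∧ z j ≠ 0 := by
      by_contra hno
      push_neg at hno
      apply hxi0
      rw [hxi i]
      have hs : ∑ j ∈ Finset.univ.filter (fun j => j ∉ Zset n 𝒮 i), z j = 0 :=
        Finset.sum_eq_zero (fun j hj => hno j (Finset.mem_filter.mp hj).2)
      rw [hs, hno i (not_mem_Zset_self i)]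
      ring
    obtain ⟨j, hjZ, hzj⟩ := hexj
    have hjZk : j ∈ Zset n 𝒮 k := by
      by_contra h; exact hzj (hzero k hk0 j h)
    obtain ⟨T, ⟨hT, hkT⟩, hjT⟩ := hjZk
    have hiT : i ∈ T := by
      by_contra hiT
      exact hjZ ⟨T, ⟨hT, hiT⟩, hjT⟩
    exact ⟨T, ⟨hT, hkT⟩, hiT⟩

/-- The forward inclusion: any `x ∈ U⁺` is in the image of the nonnegative orthant under
`α^{ε'}` for all sufficiently small `ε' > 0`. -/
lemma exists_eps_of_mem_Uset {F : Subfield ℝ} (hS₀ : ∀ S₁ ∈ 𝒮, ∀ S₂ ∈ 𝒮, S₁ ∪ S₂ ∈ 𝒮)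
    {x : Fin n → F} (hx : x ∈ Uset F n 𝒮) :
    ∃ ε : F, 0 < ε ∧ ∀ ε' : F, 0 < ε' → ε' < ε →
      ∃ z : Fin n → F, (∀ i, 0 ≤ z i) ∧ alphaMap F n 𝒮 ε' z = x := by
  obtain ⟨S₀, hS₀mem, hpos, hzero⟩ := hx
  rcases Set.eq_empty_or_nonempty S₀ with rfl | hne
  · refine ⟨1, one_pos, fun ε' h1 h2 => ⟨0, fun i => le_refl 0, ?_⟩⟩
    funext i
    have : x i = 0 := hzero i (Set.notMem_empty i)
    simp [alphaMap, this]
  haveI : Fintype ↥S₀ := Fintype.ofFinite _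
  haveI hne' : Nonempty ↥S₀ := hne.to_subtype
  set M : Matrix ↥S₀ ↥S₀ F := fun i j => if (j : Fin n) ∉ Zset n 𝒮 ↑i then 1 else 0 with hM
  set φ : F →+* ℝ := F.subtype with hφ
  set Mr : Matrix ↥S₀ ↥S₀ ℝ := M.map φ with hMr
  have hcont : Continuous fun t : ℝ => (1 + t • Mr).det :=
    Continuous.matrix_det (by fun_prop)
  have hev : ∀ᶠ t in nhds (0 : ℝ), (1 + t • Mr).det ≠ 0 := by
    have h0 : ((1 : Matrix ↥S₀ ↥S₀ ℝ) + (0 : ℝ) • Mr).det ≠ 0 := by simp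
    exact (hcont.continuousAt (x := 0)).eventually_ne h0
  obtain ⟨δ, hδpos, hδ⟩ := Metric.eventually_nhds_iff.mp hev
  obtain ⟨q, hq0, hqδ⟩ := exists_rat_btwn hδpos
  set xh : ↥S₀ → F := fun i => x ↑i with hxh
  have hxhat : ∀ i : ↥S₀, 0 < xh i := fun i => hpos _ i.2
  set xmin : F := Finset.univ.inf' Finset.univ_nonempty xh with hxmin_def
  have hxmin : 0 < xmin := by
    rw [hxmin_def, Finset.lt_inf'_iff]
    exact fun i _ => hxhat i
  have hminle : ∀ i : ↥S₀, xmin ≤ xh i := fun i => Finset.inf'_le _ (Finset.mem_univ _)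
  set X : F := ∑ i, xh i with hX_def
  have hX0 : 0 ≤ X := Finset.sum_nonneg fun i _ => (hxhat i).le
  set m : F := (Fintype.card ↥S₀ : F) with hm_def
  have hm0 : (0 : F) ≤ m := by rw [hm_def]; exact Nat.cast_nonneg _
  have h2m : (0 : F) < 2 * m + 2 := by linarith
  have h2X : (0 : F) < 2 * X + 1 := by linarith
  have hqF : (0 : F) < (q : F) := by exact_mod_cast hq0
  refine ⟨min ((q : F)) (min ((1 : F) / (2 * m + 2)) (xmin / (2 * X + 1))), ?_, ?_⟩
  · exact lt_min hqF (lt_min (by positivity) (div_pos hxmin h2X))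
  intro t ht0 htε
  have htq : t < (q : F) := lt_of_lt_of_le htε (min_le_left _ _)
  have htc2 : t < (1 : F) / (2 * m + 2) :=
    lt_of_lt_of_le htε ((min_le_right _ _).trans (min_le_left _ _))
  have htc3 : t < xmin / (2 * X + 1) :=
    lt_of_lt_of_le htε ((min_le_right _ _).trans (min_le_right _ _))
  -- determinant nonvanishing
  have htr : |(t : ℝ)| < δ := by
    rw [abs_of_pos (by exact_mod_cast ht0)]
    calc (t : ℝ) < ((q : F) : ℝ) := by exact_mod_cast htq
      _ = (q : ℝ) := by push_cast; ring
      _ < δ := hqδ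
  have hdetr : ((1 : Matrix ↥S₀ ↥S₀ ℝ) + (t : ℝ) • Mr).det ≠ 0 :=
    hδ (by rwa [Real.dist_eq, sub_zero])
  set A : Matrix ↥S₀ ↥S₀ F := 1 + t • M with hA
  have hmap : φ.mapMatrix A = 1 + (t : ℝ) • Mr := by
    ext i j
    simp only [hA, RingHom.mapMatrix_apply, Matrix.map_apply, Matrix.add_apply,
      Matrix.smul_apply, Matrix.one_apply, smul_eq_mul, hMr]
    rw [map_add, _root_.map_mul]
    congr 1
    split_ifs <;> simp
  have hdet : A.det ≠ 0 := by
    intro h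
    apply hdetr
    rw [← hmap, ← RingHom.map_det, h, map_zero]
  have hdetu : IsUnit A.det := isUnit_iff_ne_zero.mpr hdet
  set y : ↥S₀ → F := A⁻¹ *ᵥ xh with hy_def
  have hAy : A *ᵥ y = xh := by
    rw [hy_def, Matrix.mulVec_mulVec, Matrix.mul_nonsing_inv _ hdetu, Matrix.one_mulVec]
  set σ : ↥S₀ → F :=
    fun i => ∑ j ∈ Finset.univ.filter (fun j : ↥S₀ => (j : Fin n) ∉ Zset n 𝒮 ↑i), y j with hσ
  have hEq : ∀ i : ↥S₀, y i + t * σ i = xh i := by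
    intro i
    have h := congrFun hAy i
    rw [hA, Matrix.add_mulVec, Matrix.one_mulVec, Matrix.smul_mulVec] at h
    simp only [Pi.add_apply, Pi.smul_apply, smul_eq_mul] at h
    rw [← h]
    congr 1
    congr 1
    rw [hσ]
    simp [Matrix.mulVec, dotProduct, hM, ite_mul, Finset.sum_filter]
  set L : F := ∑ j, |y j| with hL_def
  have hL0 : 0 ≤ L := Finset.sum_nonneg fun j _ => abs_nonneg _
  have habsσ : ∀ i, |σ i| ≤ L := by
    intro i
    refine (Finset.abs_sum_le_sum_abs _ _).trans ?_
    exact Finset.sum_le_sum_of_subset_of_nonneg (Finset.filter_subset _ _)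
      (fun j _ _ => abs_nonneg _)
  have hyi : ∀ i, y i = xh i - t * σ i := fun i => by linarith [hEq i]
  have habsy : ∀ i, |y i| ≤ xh i + t * L := by
    intro i
    rw [hyi i]
    calc |xh i - t * σ i| ≤ |xh i| + |t * σ i| := abs_sub _ _
      _ = xh i + t * |σ i| := by rw [abs_of_pos (hxhat i), abs_mul, abs_of_pos ht0]
      _ ≤ xh i + t * L := by
          have h1 : t * |σ i| ≤ t * L := mul_le_mul_of_nonneg_left (habsσ i) ht0.le
          linarith
  have hLX : L ≤ X + m * (t * L) := by
    calc L = ∑ i, |y i| := hL_def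
      _ ≤ ∑ i : ↥S₀, (xh i + t * L) := Finset.sum_le_sum (fun i _ => habsy i)
      _ = X + m * (t * L) := by
          rw [Finset.sum_add_distrib, Finset.sum_const, Finset.card_univ, nsmul_eq_mul, hX_def,
            hm_def]
  have htm : t * m ≤ 1 / 2 := by
    have h1 : t * (2 * m + 2) < 1 := (lt_div_iff₀ h2m).mp htc2
    nlinarith
  have hL2X : L ≤ 2 * X := by
    have h1 : m * (t * L) = (t * m) * L := by ring
    have h2 : (t * m) * L ≤ (1 / 2) * L := mul_le_mul_of_nonneg_right htm hL0
    linarith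
  have htX : t * (2 * X + 1) < xmin := (lt_div_iff₀ h2X).mp htc3
  have hy0 : ∀ i, 0 ≤ y i := by
    intro i
    rw [hyi i]
    have h1 : t * σ i ≤ t * L :=
      mul_le_mul_of_nonneg_left ((le_abs_self _).trans (habsσ i)) ht0.le
    have h2 : t * L ≤ t * (2 * X) := mul_le_mul_of_nonneg_left hL2X ht0.le
    have h3 : t * (2 * X) = t * (2 * X + 1) - t := by ring
    have h4 := hminle i
    linarith
  set z : Fin n → F := fun i => if h : i ∈ S₀ then y ⟨i, h⟩ else 0 with hz_def
  have hz_eq : ∀ j : ↥S₀, z ↑j = y j := fun j => by simp [hz_def, j.2]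
  refine ⟨z, ?_, ?_⟩
  · intro i
    by_cases h : i ∈ S₀
    · rw [hz_def]; simpa [h] using hy0 ⟨i, h⟩
    · simp [hz_def, h]
  · funext i
    show z i + t * ∑ j ∈ Finset.univ.filter (fun j => j ∉ Zset n 𝒮 i), z j = x i
    by_cases hi : i ∈ S₀
    · have hsum : ∑ j ∈ Finset.univ.filter (fun j => j ∉ Zset n 𝒮 i), z j = σ ⟨i, hi⟩ := by
        rw [hσ]
        calc ∑ j ∈ Finset.univ.filter (fun j => j ∉ Zset n 𝒮 i), z j
            = ∑ j : Fin n, if j ∉ Zset n 𝒮 i then z j else 0 := Finset.sum_filter _ _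
          _ = ∑ j ∈ Finset.univ.filter (fun j => j ∈ S₀),
                (if j ∉ Zset n 𝒮 i then z j else 0) := by
              refine (Finset.sum_subset (Finset.filter_subset _ _) ?_).symm
              intro j _ hj
              have hjS : j ∉ S₀ := by simpa using hj
              simp [hz_def, hjS]
          _ = ∑ j : ↥S₀, (if (j : Fin n) ∉ Zset n 𝒮 i then z ↑j else 0) :=
              Finset.sum_subtype _ (fun j => by simp) _
          _ = ∑ j ∈ Finset.univ.filter (fun j : ↥S₀ => (j : Fin n) ∉ Zset n 𝒮 i), y j := by
              rw [Finset.sum_filter]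
              exact Finset.sum_congr rfl (fun j _ => by rw [hz_eq j])
      rw [hsum]
      have hzi : z i = y ⟨i, hi⟩ := hz_eq ⟨i, hi⟩
      rw [hzi]
      exact hEq ⟨i, hi⟩
    · have hall : ∀ j ∈ Finset.univ.filter (fun j => j ∉ Zset n 𝒮 i), z j = 0 := by
        intro j hj
        have hjZ : j ∉ Zset n 𝒮 i := (Finset.mem_filter.mp hj).2
        by_cases hjS : j ∈ S₀
        · exact absurd ⟨S₀, ⟨hS₀mem, hi⟩, hjS⟩ hjZ
        · simp [hz_def, hjS]
      rw [Finset.sum_eq_zero hall]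
      have hzi : z i = 0 := by simp [hz_def, hi]
      rw [hzi, hzero i hi]
      ring

end aux

/-- `U⁺ = ⋃_{ε > 0} ⋂_{0 < ε' < ε} α^{ε'}(F_{≥0}ⁿ)`: every element of `U⁺` lies in
`α^{ε'}(F_{≥0}ⁿ)` for all sufficiently small `ε' > 0`, and conversely. -/
theorem stmt12 (F : Subfield ℝ) (n : ℕ) (𝒮 : Set (Set (Fin n)))
    (hempty : ∅ ∈ 𝒮) (huniv : Set.univ ∈ 𝒮)
    (hcup : ∀ S₁ ∈ 𝒮, ∀ S₂ ∈ 𝒮, S₁ ∪ S₂ ∈ 𝒮)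
    (hcap : ∀ S₁ ∈ 𝒮, ∀ S₂ ∈ 𝒮, S₁ ∩ S₂ ∈ 𝒮) :
    Uset F n 𝒮 =
      ⋃ (ε : F) (_ : 0 < ε), ⋂ (ε' : F) (_ : 0 < ε' ∧ ε' < ε),
        alphaMap F n 𝒮 ε' '' {z : Fin n → F | ∀ i, 0 ≤ z i} := by
  ext x
  simp only [Set.mem_iUnion, Set.mem_iInter, Set.mem_image, Set.mem_setOf_eq]
  constructor
  · intro hx
    obtain ⟨ε, hε, h⟩ := exists_eps_of_mem_Uset hcup hx
    refine ⟨ε, hε, fun ε' hε' => ?_⟩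
    obtain ⟨z, hz, hzeq⟩ := h ε' hε'.1 hε'.2
    exact ⟨z, hz, hzeq⟩
  · rintro ⟨ε, hε, h⟩
    obtain ⟨z, hz, hzeq⟩ := h (ε / 2) ⟨by positivity, by linarith⟩
    exact mem_Uset_of_alpha hempty huniv hcup hcap (by positivity) hz hzeq
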